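/- arXiv:1312.1039 — 3 statements merged into one kernel-verified Lean document; each statement's English description precedes it below -/
import Mathlib

section
/- Let h : ℝ₊ → ℝ be increasing and convex. Then the map (X₁,…,X_m) ↦ trace h(⊗_{i=1}^m X_i) on tuples of Hermitian positive definite matrices is jointly geodesically midpoint convex: trace h(⊗_i (A_i # B_i)) ≤ (1/2) trace h(⊗_i A_i) + (1/2) trace h(⊗_i B_i). -/
set_option linter.unusedSectionVars false

namespace CGO

open Matrix
open scoped ComplexOrder

variable {n : Type*} [Fintype n] [DecidableEq n]

/-- The Löwner partial order `A ⪯ B` on matrices: `B - A` is positive semidefinite. -/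
def LoewnerLE (A B : Matrix n n ℂ) : Prop := (B - A).PosSemidef

lemma cfc_isHermitian {A : Matrix n n ℂ} (hA : A.IsHermitian) (f : ℝ → ℝ) :
    (hA.cfc f).IsHermitian := by
  rw [Matrix.IsHermitian.cfc, Unitary.conjStarAlgAut_apply, Matrix.star_eq_conjTranspose]
  exact Matrix.isHermitian_mul_mul_conjTranspose _
    (Matrix.isHermitian_diagonal_of_self_adjoint _ (by
      show star _ = _
      funext i; simp [Function.comp]))

/-- Real powers of a Hermitian matrix, defined through the spectral theorem
(for positive definite `A`, this is the usual power `A^t`). -/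
noncomputable def mpow {A : Matrix n n ℂ} (hA : A.IsHermitian) (t : ℝ) : Matrix n n ℂ :=
  hA.cfc (fun x => x ^ t)

lemma mpow_isHermitian {A : Matrix n n ℂ} (hA : A.IsHermitian) (t : ℝ) :
    (mpow hA t).IsHermitian := cfc_isHermitian hA _

lemma mul_mul_isHermitian {A B : Matrix n n ℂ} (hA : A.IsHermitian) (hB : B.IsHermitian) :
    (A * B * A).IsHermitian := by
  have h := Matrix.isHermitian_mul_mul_conjTranspose A hB
  rwa [hA.eq] at h

/-- The weighted matrix geometric mean `A #ₜ B := A^{1/2} (A^{-1/2} B A^{-1/2})^t A^{1/2}`.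
The midpoint `t = 1/2` is the matrix geometric mean `A # B`. -/
noncomputable def wgmean {A B : Matrix n n ℂ} (hA : A.PosDef) (hB : B.PosDef) (t : ℝ) :
    Matrix n n ℂ :=
  mpow hA.1 (1/2) *
    mpow (mul_mul_isHermitian (mpow_isHermitian hA.1 (-(1/2))) hB.1) t *
    mpow hA.1 (1/2)

lemma wgmean_isHermitian {A B : Matrix n n ℂ} (hA : A.PosDef) (hB : B.PosDef) (t : ℝ) :
    (wgmean hA hB t).IsHermitian := by
  have h := mul_mul_isHermitian (mpow_isHermitian hA.1 (1/2))
    (mpow_isHermitian (mul_mul_isHermitian (mpow_isHermitian hA.1 (-(1/2))) hB.1) t)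
  simpa [wgmean, mul_assoc] using h

/-- The Kronecker product `X₁ ⊗ X₂ ⊗ ⋯ ⊗ X_m` of a family of square matrices. -/
noncomputable def bigKron {m : ℕ} {dd : Fin m → Type*} [∀ i, Fintype (dd i)]
    [∀ i, DecidableEq (dd i)] (A : ∀ i, Matrix (dd i) (dd i) ℂ) :
    Matrix (∀ i, dd i) (∀ i, dd i) ℂ :=
  Matrix.of fun x y => ∏ i, A i (x i) (y i)

lemma bigKron_isHermitian {m : ℕ} {dd : Fin m → Type*} [∀ i, Fintype (dd i)]
    [∀ i, DecidableEq (dd i)] {A : ∀ i, Matrix (dd i) (dd i) ℂ}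
    (hA : ∀ i, (A i).IsHermitian) : (bigKron A).IsHermitian := by
  ext x y
  simp only [bigKron, Matrix.conjTranspose_apply, Matrix.of_apply, star_prod]
  exact Finset.prod_congr rfl fun i _ => by
    rw [← Matrix.conjTranspose_apply, (hA i).eq]

/-! ### Auxiliary lemmas -/

lemma conj_mul_conj (U : Matrix n n ℂ) (hU : star U * U = 1) (D E : Matrix n n ℂ) :
    (U * D * star U) * (U * E * star U) = U * (D * E) * star U := by
  have h' : ∀ M : Matrix n n ℂ, star U * (U * M) = M := fun M => by
    rw [← mul_assoc, hU, one_mul]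
  simp only [mul_assoc, h']

lemma cfc_mul_cfc {A : Matrix n n ℂ} (hA : A.IsHermitian) (f g : ℝ → ℝ) :
    hA.cfc f * hA.cfc g = hA.cfc fun x => f x * g x := by
  rw [Matrix.IsHermitian.cfc, Matrix.IsHermitian.cfc, Matrix.IsHermitian.cfc,
    Unitary.conjStarAlgAut_apply, Unitary.conjStarAlgAut_apply, Unitary.conjStarAlgAut_apply,
    conj_mul_conj _ (Unitary.coe_star_mul_self _), Matrix.diagonal_mul_diagonal]
  have hd : (Matrix.diagonal (fun i => (RCLike.ofReal ∘ f ∘ hA.eigenvalues) i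
      * (RCLike.ofReal ∘ g ∘ hA.eigenvalues) i) : Matrix n n ℂ)
      = Matrix.diagonal (RCLike.ofReal ∘ (fun x => f x * g x) ∘ hA.eigenvalues) :=
    congrArg Matrix.diagonal (funext fun i => by simp)
  rw [hd]

lemma cfc_congr_eig {A : Matrix n n ℂ} (hA : A.IsHermitian) {f g : ℝ → ℝ}
    (hfg : ∀ i, f (hA.eigenvalues i) = g (hA.eigenvalues i)) : hA.cfc f = hA.cfc g := by
  rw [Matrix.IsHermitian.cfc, Matrix.IsHermitian.cfc]
  have hd : (Matrix.diagonal (RCLike.ofReal ∘ f ∘ hA.eigenvalues) : Matrix n n ℂ)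
      = Matrix.diagonal (RCLike.ofReal ∘ g ∘ hA.eigenvalues) :=
    congrArg Matrix.diagonal (funext fun i => by simp [hfg i])
  rw [hd]

lemma cfc_one_eq {A : Matrix n n ℂ} (hA : A.IsHermitian) : hA.cfc (fun _ => 1) = 1 := by
  rw [Matrix.IsHermitian.cfc]
  have h1 : Matrix.diagonal (RCLike.ofReal ∘ (fun _ : ℝ => (1:ℝ)) ∘ hA.eigenvalues)
      = (1 : Matrix n n ℂ) := by
    rw [show (RCLike.ofReal ∘ (fun _ : ℝ => (1:ℝ)) ∘ hA.eigenvalues : n → ℂ) = fun _ => 1 from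
      funext fun i => by simp, Matrix.diagonal_one]
  rw [h1, Unitary.conjStarAlgAut_apply, mul_one, Matrix.mem_unitaryGroup_iff.mp (SetLike.coe_mem _)]

lemma cfc_id_eq {A : Matrix n n ℂ} (hA : A.IsHermitian) : hA.cfc (fun x => x) = A := by
  rw [Matrix.IsHermitian.cfc]
  exact hA.spectral_theorem.symm

lemma cfc_posSemidef {A : Matrix n n ℂ} (hA : A.IsHermitian) {f : ℝ → ℝ}
    (hf : ∀ i, 0 ≤ f (hA.eigenvalues i)) : (hA.cfc f).PosSemidef := by
  rw [Matrix.IsHermitian.cfc, Unitary.conjStarAlgAut_apply, Matrix.star_eq_conjTranspose]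
  exact (Matrix.PosSemidef.diagonal fun i =>
    (RCLike.ofReal_nonneg (K := ℂ)).mpr (hf i)).mul_mul_conjTranspose_same _

lemma mpow_half_mul_self {A : Matrix n n ℂ} (hA : A.PosSemidef) :
    mpow hA.1 (1/2) * mpow hA.1 (1/2) = A := by
  rw [mpow, cfc_mul_cfc,
    cfc_congr_eig hA.1 (g := fun x => x) fun i => by
      rw [← Real.rpow_add' (hA.eigenvalues_nonneg i) (by norm_num),
        show (1:ℝ)/2 + 1/2 = 1 by norm_num, Real.rpow_one],
    cfc_id_eq]

lemma mpow_half_mul_neg_half {A : Matrix n n ℂ} (hA : A.PosDef) :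
    mpow hA.1 (1/2) * mpow hA.1 (-(1/2)) = 1 := by
  rw [mpow, mpow, cfc_mul_cfc,
    cfc_congr_eig hA.1 (g := fun _ => 1) fun i => by
      rw [← Real.rpow_add (hA.eigenvalues_pos i),
        show (1:ℝ)/2 + -(1/2) = 0 by norm_num, Real.rpow_zero],
    cfc_one_eq]

lemma mpow_neg_half_mul_half {A : Matrix n n ℂ} (hA : A.PosDef) :
    mpow hA.1 (-(1/2)) * mpow hA.1 (1/2) = 1 := by
  rw [mpow, mpow, cfc_mul_cfc,
    cfc_congr_eig hA.1 (g := fun _ => 1) fun i => by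
      rw [← Real.rpow_add (hA.eigenvalues_pos i),
        show -(1/2 : ℝ) + 1/2 = 0 by norm_num, Real.rpow_zero],
    cfc_one_eq]

lemma mpow_half_posSemidef {A : Matrix n n ℂ} (hA : A.PosSemidef) :
    (mpow hA.1 (1/2)).PosSemidef :=
  cfc_posSemidef hA.1 fun i => Real.rpow_nonneg (hA.eigenvalues_nonneg i) _

lemma diag_re_nonneg {P : Matrix n n ℂ} (hP : P.PosSemidef) (j : n) :
    0 ≤ RCLike.re (P j j) := by
  have h := hP.re_dotProduct_nonneg (Pi.single j 1)
  have e : dotProduct (star (Pi.single j 1)) (P *ᵥ Pi.single j 1) = P j j := by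
    simp [dotProduct, Matrix.mulVec, Pi.single_apply, apply_ite, mul_ite, ite_mul,
      Finset.sum_ite_eq, Finset.sum_ite_eq']
  rwa [e] at h

lemma diag_conj_expand {P : Matrix n n ℂ} (hP : P.IsHermitian) (U : Matrix n n ℂ) (j : n) :
    (star U * P * U) j j
      = ((∑ k, ‖(star U * (hP.eigenvectorUnitary : Matrix n n ℂ)) j k‖ ^ 2
          * hP.eigenvalues k : ℝ) : ℂ) := by
  set V : Matrix n n ℂ := (hP.eigenvectorUnitary : Matrix n n ℂ) with hV
  set W : Matrix n n ℂ := star U * V with hWdef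
  have hsplit : star U * P * U
      = W * Matrix.diagonal (RCLike.ofReal ∘ hP.eigenvalues) * star W := by
    conv_lhs => rw [hP.spectral_theorem, Unitary.conjStarAlgAut_apply]
    rw [hWdef, Matrix.star_mul, star_star]
    simp only [mul_assoc, hV]
  rw [hsplit]
  rw [Matrix.mul_apply]
  push_cast
  refine Finset.sum_congr rfl fun k _ => ?_
  rw [Matrix.mul_diagonal, Matrix.star_apply]
  simp only [Function.comp_apply]
  rw [mul_right_comm, RCLike.star_def, RCLike.mul_conj]
  norm_cast

lemma row_sum_norm {U V : Matrix n n ℂ} (hU : U ∈ Matrix.unitaryGroup n ℂ)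
    (hV : V ∈ Matrix.unitaryGroup n ℂ) (j : n) :
    ∑ k, ‖(star U * V) j k‖ ^ 2 = 1 := by
  set W : Matrix n n ℂ := star U * V with hW
  have hWW : W * star W = 1 := by
    rw [hW, Matrix.star_mul, star_star]
    calc star U * V * (star V * U) = star U * (V * star V) * U := by
          simp only [mul_assoc]
      _ = 1 := by rw [Matrix.mem_unitaryGroup_iff.mp hV, mul_one,
            Matrix.mem_unitaryGroup_iff'.mp hU]
  have h1 : ((∑ k, ‖W j k‖ ^ 2 : ℝ) : ℂ) = 1 := by
    have h2 : ∑ k, W j k * star (W j k) = (1 : ℂ) := by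
      have h3 := congrArg (fun M : Matrix n n ℂ => M j j) hWW
      simpa [Matrix.mul_apply, Matrix.star_apply] using h3
    rw [← h2]
    push_cast
    refine Finset.sum_congr rfl fun k _ => ?_
    rw [RCLike.star_def, RCLike.mul_conj]
    norm_cast
  exact_mod_cast h1

lemma col_sum_norm {U V : Matrix n n ℂ} (hU : U ∈ Matrix.unitaryGroup n ℂ)
    (hV : V ∈ Matrix.unitaryGroup n ℂ) (k : n) :
    ∑ j, ‖(star U * V) j k‖ ^ 2 = 1 := by
  set W : Matrix n n ℂ := star U * V with hW
  have hWW : star W * W = 1 := by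
    rw [hW, Matrix.star_mul, star_star]
    calc star V * U * (star U * V) = star V * (U * star U) * V := by
          simp only [mul_assoc]
      _ = 1 := by rw [Matrix.mem_unitaryGroup_iff.mp hU, mul_one,
            Matrix.mem_unitaryGroup_iff'.mp hV]
  have h1 : ((∑ j, ‖W j k‖ ^ 2 : ℝ) : ℂ) = 1 := by
    have h2 : ∑ j, star (W j k) * W j k = (1 : ℂ) := by
      have h3 := congrArg (fun M : Matrix n n ℂ => M k k) hWW
      simpa [Matrix.mul_apply, Matrix.star_apply] using h3
    rw [← h2]
    push_cast
    refine Finset.sum_congr rfl fun j _ => ?_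
    rw [RCLike.star_def, RCLike.conj_mul]
    norm_cast
  exact_mod_cast h1

/-- Peierls inequality. -/
lemma peierls {P : Matrix n n ℂ} (hPh : P.IsHermitian) (hP : P.PosSemidef)
    {U : Matrix n n ℂ} (hU : U ∈ Matrix.unitaryGroup n ℂ) {h : ℝ → ℝ}
    (hconv : ConvexOn ℝ (Set.Ici 0) h) :
    ∑ j, h (RCLike.re ((star U * P * U) j j)) ≤ ∑ k, h (hPh.eigenvalues k) := by
  set W : Matrix n n ℂ := star U * (hPh.eigenvectorUnitary : Matrix n n ℂ) with hW
  have hexp : ∀ j, RCLike.re ((star U * P * U) j j)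
      = ∑ k, ‖W j k‖ ^ 2 * hPh.eigenvalues k := fun j => by
    rw [diag_conj_expand hPh U j]
    exact RCLike.ofReal_re _
  have hstep : ∀ j, h (RCLike.re ((star U * P * U) j j))
      ≤ ∑ k, ‖W j k‖ ^ 2 * h (hPh.eigenvalues k) := by
    intro j
    rw [hexp j]
    have hj := hconv.map_sum_le (t := Finset.univ) (w := fun k => ‖W j k‖ ^ 2)
      (p := fun k => hPh.eigenvalues k) (fun k _ => sq_nonneg _)
      (row_sum_norm hU (SetLike.coe_mem _) j)
      (fun k _ => Set.mem_Ici.mpr (hP.eigenvalues_nonneg k))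
    simpa only [smul_eq_mul] using hj
  calc ∑ j, h (RCLike.re ((star U * P * U) j j))
      ≤ ∑ j, ∑ k, ‖W j k‖ ^ 2 * h (hPh.eigenvalues k) :=
        Finset.sum_le_sum fun j _ => hstep j
    _ = ∑ k, (∑ j, ‖W j k‖ ^ 2) * h (hPh.eigenvalues k) := by
        rw [Finset.sum_comm]
        exact Finset.sum_congr rfl fun k _ => (Finset.sum_mul _ _ _).symm
    _ = ∑ k, h (hPh.eigenvalues k) := by
        refine Finset.sum_congr rfl fun k _ => ?_
        rw [col_sum_norm hU (SetLike.coe_mem _) k, one_mul]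

lemma real_step {h : ℝ → ℝ} (hmono : MonotoneOn h (Set.Ici 0))
    (hconv : ConvexOn ℝ (Set.Ici 0) h) {lam a b : ℝ}
    (hlam : 0 ≤ lam) (ha : 0 ≤ a) (hb : 0 ≤ b) (hle : lam + lam ≤ a + b) :
    h lam ≤ (1/2) * h a + (1/2) * h b := by
  have hmem : (1/2 : ℝ) * a + (1/2) * b ∈ Set.Ici (0:ℝ) := by
    simp only [Set.mem_Ici]; nlinarith
  have h2 : h lam ≤ h ((1/2)*a + (1/2)*b) :=
    hmono (Set.mem_Ici.mpr hlam) hmem (by linarith)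
  have h3 := hconv.2 (Set.mem_Ici.mpr ha) (Set.mem_Ici.mpr hb)
    (by norm_num : (0:ℝ) ≤ 1/2) (by norm_num : (0:ℝ) ≤ 1/2) (by norm_num)
  simp only [smul_eq_mul] at h3
  exact h2.trans h3

section Kron

variable {m : ℕ} {dd : Fin m → Type*} [∀ i, Fintype (dd i)] [∀ i, DecidableEq (dd i)]

lemma bigKron_mul (A B : ∀ i, Matrix (dd i) (dd i) ℂ) :
    bigKron A * bigKron B = bigKron (fun i => A i * B i) := by
  ext x y
  simp only [bigKron, Matrix.mul_apply, Matrix.of_apply]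
  rw [Finset.prod_univ_sum, Fintype.piFinset_univ]
  exact Finset.sum_congr rfl fun z _ => (Finset.prod_mul_distrib).symm

lemma bigKron_one : bigKron (fun i => (1 : Matrix (dd i) (dd i) ℂ)) = 1 := by
  ext x y
  simp only [bigKron, Matrix.of_apply, Matrix.one_apply]
  by_cases hxy : x = y
  · subst hxy; simp
  · rw [if_neg hxy]
    obtain ⟨i, hi⟩ : ∃ i, x i ≠ y i := by
      by_contra hc; push_neg at hc; exact hxy (funext hc)
    exact Finset.prod_eq_zero (Finset.mem_univ i) (by rw [if_neg hi])

lemma bigKron_posSemidef {A : ∀ i, Matrix (dd i) (dd i) ℂ} (hA : ∀ i, (A i).PosSemidef) :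
    (bigKron A).PosSemidef := by
  have hSh : ∀ i, (mpow (hA i).1 (1/2)).IsHermitian := fun i => mpow_isHermitian _ _
  have h1 : (bigKron fun i => mpow (hA i).1 (1/2))ᴴ * (bigKron fun i => mpow (hA i).1 (1/2))
      = bigKron A := by
    rw [(bigKron_isHermitian hSh).eq, bigKron_mul]
    exact congrArg _ (funext fun i => mpow_half_mul_self (hA i))
  rw [← h1]
  exact Matrix.posSemidef_conjTranspose_mul_self _

lemma key_psd {A B : ∀ i, Matrix (dd i) (dd i) ℂ}
    (hA : ∀ i, (A i).PosDef) (hB : ∀ i, (B i).PosDef) :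
    (bigKron A + bigKron B - (bigKron (fun i => wgmean (hA i) (hB i) (1/2)) +
      bigKron (fun i => wgmean (hA i) (hB i) (1/2)))).PosSemidef ∧
    (bigKron (fun i => wgmean (hA i) (hB i) (1/2))).PosSemidef := by
  set Si : ∀ i, Matrix (dd i) (dd i) ℂ := fun i => mpow (hA i).1 (1/2) with hSi
  set Ti : ∀ i, Matrix (dd i) (dd i) ℂ := fun i => mpow (hA i).1 (-(1/2)) with hTi
  have hCiH : ∀ i, (Ti i * B i * Ti i).IsHermitian := fun i =>
    mul_mul_isHermitian (mpow_isHermitian _ _) (hB i).1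
  have hCiPSD : ∀ i, (Ti i * B i * Ti i).PosSemidef := fun i => by
    have h' := (hB i).posSemidef.mul_mul_conjTranspose_same (Ti i)
    rwa [(mpow_isHermitian _ _).eq] at h'
  set Ri : ∀ i, Matrix (dd i) (dd i) ℂ := fun i => mpow (hCiH i) (1/2) with hRi
  set S := bigKron Si with hS
  set T := bigKron Ti with hT
  set Rk := bigKron Ri with hRk
  have hSh : S.IsHermitian := bigKron_isHermitian fun i => mpow_isHermitian _ _
  have hRkPSD : Rk.PosSemidef := bigKron_posSemidef fun i => mpow_half_posSemidef (hCiPSD i)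
  have hG_SRS : bigKron (fun i => wgmean (hA i) (hB i) (1/2)) = S * Rk * S := by
    rw [hS, hRk, bigKron_mul, bigKron_mul]
    rfl
  have hSS : S * S = bigKron A := by
    rw [hS, bigKron_mul]
    exact congrArg _ (funext fun i => mpow_half_mul_self (hA i).posSemidef)
  have hST : S * T = 1 := by
    rw [hS, hT, bigKron_mul,
      show (fun i => Si i * Ti i) = fun i => (1 : Matrix (dd i) (dd i) ℂ) from
        funext fun i => mpow_half_mul_neg_half (hA i)]
    exact bigKron_one
  have hTS : T * S = 1 := by
    rw [hS, hT, bigKron_mul,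
      show (fun i => Ti i * Si i) = fun i => (1 : Matrix (dd i) (dd i) ℂ) from
        funext fun i => mpow_neg_half_mul_half (hA i)]
    exact bigKron_one
  have hRR : Rk * Rk = T * bigKron B * T := by
    rw [hRk, hT, bigKron_mul, bigKron_mul, bigKron_mul]
    exact congrArg _ (funext fun i => mpow_half_mul_self (hCiPSD i))
  have hY : S * (Rk * Rk) * S = bigKron B := by
    rw [hRR]
    calc S * (T * bigKron B * T) * S = (S * T) * bigKron B * (T * S) := by
          simp only [mul_assoc]
      _ = bigKron B := by rw [hST, hTS, one_mul, mul_one]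
  have hGpsd : (bigKron (fun i => wgmean (hA i) (hB i) (1/2))).PosSemidef := by
    rw [hG_SRS]
    have h' := hRkPSD.conjTranspose_mul_mul_same S
    rwa [hSh.eq] at h'
  refine ⟨?_, hGpsd⟩
  have key_eq : bigKron A + bigKron B - (bigKron (fun i => wgmean (hA i) (hB i) (1/2)) +
      bigKron (fun i => wgmean (hA i) (hB i) (1/2)))
      = S * ((1 - Rk) * (1 - Rk)) * S := by
    rw [hG_SRS, ← hSS, ← hY]
    noncomm_ring
  rw [key_eq]
  have h1Rh : (1 - Rk).IsHermitian := Matrix.isHermitian_one.sub hRkPSD.1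
  have hpsd1 : ((1 - Rk) * (1 - Rk)).PosSemidef := by
    have h' := Matrix.posSemidef_conjTranspose_mul_self (1 - Rk)
    rwa [h1Rh.eq] at h'
  have h' := hpsd1.conjTranspose_mul_mul_same S
  rwa [hSh.eq] at h'

end Kron

/-- For increasing convex `h : ℝ₊ → ℝ`, the map
`(X₁,…,X_m) ↦ trace h(⊗ᵢ Xᵢ) = ∑_j h(λ_j(⊗ᵢ Xᵢ))` is jointly geodesically
midpoint convex. -/
theorem trace_h_bigKron_gconvex {m : ℕ} {dd : Fin m → Type*} [∀ i, Fintype (dd i)]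
    [∀ i, DecidableEq (dd i)] {h : ℝ → ℝ}
    (hmono : MonotoneOn h (Set.Ici 0)) (hconv : ConvexOn ℝ (Set.Ici 0) h)
    {A B : ∀ i, Matrix (dd i) (dd i) ℂ}
    (hA : ∀ i, (A i).PosDef) (hB : ∀ i, (B i).PosDef) :
    ∑ j, h ((bigKron_isHermitian
        (fun i => wgmean_isHermitian (hA i) (hB i) (1/2))).eigenvalues j) ≤
      (1/2) * ∑ j, h ((bigKron_isHermitian (fun i => (hA i).1)).eigenvalues j) +
      (1/2) * ∑ j, h ((bigKron_isHermitian (fun i => (hB i).1)).eigenvalues j) := by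
  classical
  obtain ⟨hDpsd, hGpsd⟩ := key_psd hA hB
  have hGh : (bigKron (fun i => wgmean (hA i) (hB i) (1/2))).IsHermitian :=
    bigKron_isHermitian (fun i => wgmean_isHermitian (hA i) (hB i) (1/2))
  have hXh : (bigKron A).IsHermitian := bigKron_isHermitian fun i => (hA i).1
  have hYh : (bigKron B).IsHermitian := bigKron_isHermitian fun i => (hB i).1
  have hXpsd : (bigKron A).PosSemidef := bigKron_posSemidef fun i => (hA i).posSemidef
  have hYpsd : (bigKron B).PosSemidef := bigKron_posSemidef fun i => (hB i).posSemidef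
  set G := bigKron (fun i => wgmean (hA i) (hB i) (1/2)) with hGdef
  set X := bigKron A with hXdef
  set Y := bigKron B with hYdef
  set U : Matrix (∀ i, dd i) (∀ i, dd i) ℂ := (↑hGh.eigenvectorUnitary : Matrix (∀ i, dd i) (∀ i, dd i) ℂ) with hUdef
  have hU : U ∈ Matrix.unitaryGroup (∀ i, dd i) ℂ := SetLike.coe_mem _
  -- eigenvalues of G as diagonal entries
  have hlam : ∀ j, hGh.eigenvalues j = RCLike.re ((star U * G * U) j j) := by
    intro j
    rw [hUdef, ← Unitary.conjStarAlgAut_star_apply (S := ℂ), hGh.conjStarAlgAut_star_eigenvectorUnitary]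
    simp [Matrix.diagonal_apply_eq, Function.comp]
  set x : (∀ i, dd i) → ℝ := fun j => RCLike.re ((star U * X * U) j j) with hxdef
  set y : (∀ i, dd i) → ℝ := fun j => RCLike.re ((star U * Y * U) j j) with hydef
  have hx0 : ∀ j, 0 ≤ x j := fun j => by
    have h' : (star U * X * U).PosSemidef := by
      rw [Matrix.star_eq_conjTranspose]
      exact hXpsd.conjTranspose_mul_mul_same U
    exact diag_re_nonneg h' j
  have hy0 : ∀ j, 0 ≤ y j := fun j => by
    have h' : (star U * Y * U).PosSemidef := by
      rw [Matrix.star_eq_conjTranspose]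
      exact hYpsd.conjTranspose_mul_mul_same U
    exact diag_re_nonneg h' j
  have h2lam : ∀ j, hGh.eigenvalues j + hGh.eigenvalues j ≤ x j + y j := by
    intro j
    have hQ : (star U * (X + Y - (G + G)) * U).PosSemidef := by
      rw [Matrix.star_eq_conjTranspose]
      exact hDpsd.conjTranspose_mul_mul_same U
    have h0 := diag_re_nonneg hQ j
    have hexp : star U * (X + Y - (G + G)) * U
        = star U * X * U + star U * Y * U - (star U * G * U + star U * G * U) := by
      noncomm_ring
    rw [hexp] at h0
    simp only [Matrix.add_apply, Matrix.sub_apply, map_add, map_sub] at h0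
    rw [hlam j]
    dsimp only [x, y]
    linarith
  have hlam0 : ∀ j, 0 ≤ hGh.eigenvalues j := fun j => hGpsd.eigenvalues_nonneg j
  have step : ∀ j, h (hGh.eigenvalues j) ≤ (1/2) * h (x j) + (1/2) * h (y j) := fun j =>
    real_step hmono hconv (hlam0 j) (hx0 j) (hy0 j) (h2lam j)
  calc ∑ j, h (hGh.eigenvalues j)
      ≤ ∑ j, ((1/2) * h (x j) + (1/2) * h (y j)) := Finset.sum_le_sum fun j _ => step j
    _ = (1/2) * ∑ j, h (x j) + (1/2) * ∑ j, h (y j) := by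
        rw [Finset.sum_add_distrib, Finset.mul_sum, Finset.mul_sum]
    _ ≤ (1/2) * ∑ j, h (hXh.eigenvalues j) + (1/2) * ∑ j, h (hYh.eigenvalues j) := by
        have px := peierls hXh hXpsd hU hconv
        have py := peierls hYh hYpsd hU hconv
        have l1 : (1/2 : ℝ) * ∑ j, h (x j) ≤ (1/2) * ∑ j, h (hXh.eigenvalues j) :=
          mul_le_mul_of_nonneg_left px (by norm_num)
        have l2 : (1/2 : ℝ) * ∑ j, h (y j) ≤ (1/2) * ∑ j, h (hYh.eigenvalues j) :=
          mul_le_mul_of_nonneg_left py (by norm_num)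
        exact add_le_add l1 l2

end CGO
end

section
/- The Thompson metric contracts under positive translation: for Hermitian positive definite X, Y and positive semidefinite A with λ_min(A) = β and α = max{‖X‖,‖Y‖}, δ_T(X+A, Y+A) ≤ (α/(α+β)) δ_T(X,Y). -/
set_option linter.unusedSectionVars false
set_option maxHeartbeats 1000000

namespace CGO

open Matrix
open scoped ComplexOrder

variable {n : Type*} [Fintype n] [DecidableEq n]

/-- `wfac A B = W(A/B) = inf {λ > 0 : A ⪯ λ B}`. -/
noncomputable def wfac (A B : Matrix n n ℂ) : ℝ :=
  sInf {l : ℝ | 0 < l ∧ ((l : ℝ) • B - A).PosSemidef}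

/-- The Thompson part metric on positive definite matrices,
`δ_T(A,B) = ‖log(B^{-1/2} A B^{-1/2})‖ = max (log W(A/B)) (log W(B/A))`. -/
noncomputable def thompson (A B : Matrix n n ℂ) : ℝ :=
  max (Real.log (wfac A B)) (Real.log (wfac B A))

/-! ### Auxiliary lemmas -/

lemma psd_smul {M : Matrix n n ℂ} (hM : M.PosSemidef) {c : ℝ} (hc : 0 ≤ c) :
    (c • M).PosSemidef := by
  refine .of_dotProduct_mulVec_nonneg ?_ fun x => ?_
  · unfold Matrix.IsHermitian
    rw [conjTranspose_smul, hM.1.eq, star_trivial]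
  · rw [smul_mulVec, dotProduct_smul]
    have h0 := hM.dotProduct_mulVec_nonneg x
    rw [Complex.real_smul]
    exact mul_nonneg (by exact_mod_cast hc) h0

lemma isHermitian_smul_real {M : Matrix n n ℂ} (hM : M.IsHermitian) (c : ℝ) :
    (c • M).IsHermitian := by
  unfold Matrix.IsHermitian
  rw [conjTranspose_smul, hM.eq, star_trivial]

lemma re_dot_smul (r : ℝ) (M : Matrix n n ℂ) (v : n → ℂ) :
    RCLike.re (star v ⬝ᵥ (r • M) *ᵥ v) = r * RCLike.re (star v ⬝ᵥ M *ᵥ v) := by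
  rw [smul_mulVec, dotProduct_smul, RCLike.smul_re]

/-- conjugation form of `r • 1 - M` via the spectral theorem. -/
lemma smul_one_sub_eq {M : Matrix n n ℂ} (hM : M.IsHermitian) (r : ℝ) :
    r • (1 : Matrix n n ℂ) - M =
      (hM.eigenvectorUnitary : Matrix n n ℂ) *
        diagonal (fun i => ((r - hM.eigenvalues i : ℝ) : ℂ)) *
        (hM.eigenvectorUnitary : Matrix n n ℂ)ᴴ := by
  have hU : (hM.eigenvectorUnitary : Matrix n n ℂ) * (hM.eigenvectorUnitary : Matrix n n ℂ)ᴴ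
      = 1 := by
    rw [← star_eq_conjTranspose]
    exact (Matrix.mem_unitaryGroup_iff).mp hM.eigenvectorUnitary.2
  have h1 : r • (1 : Matrix n n ℂ) =
      (hM.eigenvectorUnitary : Matrix n n ℂ) * (r • (1 : Matrix n n ℂ)) *
        (hM.eigenvectorUnitary : Matrix n n ℂ)ᴴ := by
    rw [mul_smul_comm, smul_mul_assoc, mul_one, hU]
  have h2 : r • (1 : Matrix n n ℂ) - diagonal (RCLike.ofReal ∘ hM.eigenvalues) =
      diagonal (fun i => ((r - hM.eigenvalues i : ℝ) : ℂ)) := by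
    ext i j
    rcases eq_or_ne i j with h | h
    · subst h
      simp [diagonal_apply_eq, Matrix.smul_apply, Matrix.one_apply_eq, Complex.real_smul]
    · simp [diagonal_apply_ne _ h, Matrix.smul_apply, Matrix.one_apply_ne h]
  conv_lhs => rw [hM.spectral_theorem, Unitary.conjStarAlgAut_apply, h1]
  rw [← star_eq_conjTranspose, ← sub_mul, ← mul_sub, h2, star_eq_conjTranspose]

lemma psd_smul_one_sub {M : Matrix n n ℂ} (hM : M.IsHermitian) {r : ℝ}
    (hr : ∀ i, hM.eigenvalues i ≤ r) :
    (r • (1 : Matrix n n ℂ) - M).PosSemidef := by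
  rw [smul_one_sub_eq hM r]
  refine (posSemidef_diagonal_iff.mpr fun i => ?_).mul_mul_conjTranspose_same _
  have : (0 : ℝ) ≤ r - hM.eigenvalues i := sub_nonneg.mpr (hr i)
  exact_mod_cast this

lemma sub_smul_one_eq {M : Matrix n n ℂ} (hM : M.IsHermitian) (r : ℝ) :
    M - r • (1 : Matrix n n ℂ) =
      (hM.eigenvectorUnitary : Matrix n n ℂ) *
        diagonal (fun i => ((hM.eigenvalues i - r : ℝ) : ℂ)) *
        (hM.eigenvectorUnitary : Matrix n n ℂ)ᴴ := by
  have hU : (hM.eigenvectorUnitary : Matrix n n ℂ) * (hM.eigenvectorUnitary : Matrix n n ℂ)ᴴ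
      = 1 := by
    rw [← star_eq_conjTranspose]
    exact (Matrix.mem_unitaryGroup_iff).mp hM.eigenvectorUnitary.2
  have h1 : r • (1 : Matrix n n ℂ) =
      (hM.eigenvectorUnitary : Matrix n n ℂ) * (r • (1 : Matrix n n ℂ)) *
        (hM.eigenvectorUnitary : Matrix n n ℂ)ᴴ := by
    rw [mul_smul_comm, smul_mul_assoc, mul_one, hU]
  have h2 : diagonal (RCLike.ofReal ∘ hM.eigenvalues) - r • (1 : Matrix n n ℂ) =
      diagonal (fun i => ((hM.eigenvalues i - r : ℝ) : ℂ)) := by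
    ext i j
    rcases eq_or_ne i j with h | h
    · subst h
      simp [diagonal_apply_eq, Matrix.smul_apply, Matrix.one_apply_eq, Complex.real_smul]
    · simp [diagonal_apply_ne _ h, Matrix.smul_apply, Matrix.one_apply_ne h]
  conv_lhs => rw [hM.spectral_theorem, Unitary.conjStarAlgAut_apply, h1]
  rw [← star_eq_conjTranspose, ← sub_mul, ← mul_sub, h2, star_eq_conjTranspose]

lemma psd_sub_smul_one {M : Matrix n n ℂ} (hM : M.IsHermitian) {r : ℝ}
    (hr : ∀ i, r ≤ hM.eigenvalues i) :
    (M - r • (1 : Matrix n n ℂ)).PosSemidef := by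
  rw [sub_smul_one_eq hM r]
  refine (posSemidef_diagonal_iff.mpr fun i => ?_).mul_mul_conjTranspose_same _
  have : (0 : ℝ) ≤ hM.eigenvalues i - r := sub_nonneg.mpr (hr i)
  exact_mod_cast this

/-- The defining set of `wfac` is nonempty for positive definite matrices. -/
lemma wfac_set_nonempty [Nonempty n] {X Y : Matrix n n ℂ} (hX : X.PosDef) (hY : Y.PosDef) :
    {l : ℝ | 0 < l ∧ ((l : ℝ) • Y - X).PosSemidef}.Nonempty := by
  obtain ⟨i₀, hi₀⟩ := exists_eq_ciSup_of_finite (f := hX.1.eigenvalues)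
  obtain ⟨j₀, hj₀⟩ := exists_eq_ciInf_of_finite (f := hY.1.eigenvalues)
  set a : ℝ := ⨆ i, hX.1.eigenvalues i with ha
  set b : ℝ := ⨅ i, hY.1.eigenvalues i with hb
  have hapos : 0 < a := hi₀ ▸ hX.eigenvalues_pos i₀
  have hbpos : 0 < b := hj₀ ▸ hY.eigenvalues_pos j₀
  refine ⟨a / b, div_pos hapos hbpos, ?_⟩
  have key : (a / b) • Y - X = (a / b) • (Y - b • (1 : Matrix n n ℂ)) +
      (a • (1 : Matrix n n ℂ) - X) := by
    have h : (a / b) * b = a := div_mul_cancel₀ a hbpos.ne'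
    rw [smul_sub, smul_smul, h]
    module
  rw [key]
  refine PosSemidef.add (psd_smul ?_ (div_pos hapos hbpos).le) (psd_smul_one_sub hX.1 ?_)
  · exact psd_sub_smul_one hY.1 fun i => ciInf_le (Set.finite_range _).bddBelow i
  · exact fun i => le_ciSup (Set.finite_range _).bddAbove i

lemma psd_of_forall_eps {M N : Matrix n n ℂ} (hM : M.IsHermitian) (hN : N.PosSemidef)
    (h : ∀ ε : ℝ, 0 < ε → (M + ε • N).PosSemidef) : M.PosSemidef := by
  refine .of_dotProduct_mulVec_nonneg hM fun x => ?_
  have him : (star x ⬝ᵥ M *ᵥ x).im = 0 := by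
    have h1 := ((h 1 one_pos).dotProduct_mulVec_nonneg x).2.symm
    have h2 := ((h 2 two_pos).dotProduct_mulVec_nonneg x).2.symm
    simp only [add_mulVec, dotProduct_add, Complex.add_im, Complex.zero_im] at h1 h2
    rw [show ((1:ℝ) • N : Matrix n n ℂ) = N by simp] at h1
    have hsm : (star x ⬝ᵥ ((2:ℝ) • N) *ᵥ x) = (2:ℝ) • (star x ⬝ᵥ N *ᵥ x) := by
      rw [smul_mulVec, dotProduct_smul]
    rw [hsm] at h2
    have : ((2:ℝ) • (star x ⬝ᵥ N *ᵥ x)).im = 2 * (star x ⬝ᵥ N *ᵥ x).im := by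
      rw [Complex.real_smul, Complex.mul_im]
      simp
    rw [this] at h2
    linarith
  have hre : 0 ≤ (star x ⬝ᵥ M *ᵥ x).re := by
    have hNre : 0 ≤ (star x ⬝ᵥ N *ᵥ x).re := hN.re_dotProduct_nonneg x
    refine le_of_forall_pos_le_add fun ε hε => ?_
    have hδ : (0:ℝ) < ε / ((star x ⬝ᵥ N *ᵥ x).re + 1) := by positivity
    have h3 := ((h _ hδ).dotProduct_mulVec_nonneg x).1
    simp only [add_mulVec, dotProduct_add, Complex.add_re, Complex.zero_re] at h3
    have hsm : (star x ⬝ᵥ ((ε / ((star x ⬝ᵥ N *ᵥ x).re + 1)) • N) *ᵥ x).re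
        = (ε / ((star x ⬝ᵥ N *ᵥ x).re + 1)) * (star x ⬝ᵥ N *ᵥ x).re := by
      simpa using re_dot_smul (ε / ((star x ⬝ᵥ N *ᵥ x).re + 1)) N x
    rw [hsm] at h3
    have hle : (ε / ((star x ⬝ᵥ N *ᵥ x).re + 1)) * (star x ⬝ᵥ N *ᵥ x).re ≤ ε := by
      rw [div_mul_eq_mul_div, div_le_iff₀ (by positivity)]
      nlinarith
    linarith
  rw [Complex.le_def]
  simpa using ⟨hre, him.symm⟩

/-- The infimum in `wfac` is attained: `X ⪯ (wfac X Y) • Y`. -/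
lemma wfac_psd [Nonempty n] {X Y : Matrix n n ℂ} (hX : X.PosDef) (hY : Y.PosDef) :
    ((wfac X Y) • Y - X).PosSemidef := by
  set S := {l : ℝ | 0 < l ∧ ((l : ℝ) • Y - X).PosSemidef} with hS
  have hne : S.Nonempty := wfac_set_nonempty hX hY
  have hbdd : BddBelow S := ⟨0, fun l hl => hl.1.le⟩
  set m := wfac X Y with hm
  have hherm : (m • Y - X).IsHermitian := (isHermitian_smul_real hY.1 m).sub hX.1
  refine psd_of_forall_eps hherm hY.posSemidef fun ε hε => ?_
  obtain ⟨l, hlS, hl⟩ := exists_lt_of_csInf_lt hne (show sInf S < m + ε by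
    rw [hm, wfac, ← hS]; linarith)
  have key : (m • Y - X) + ε • Y = (m + ε - l) • Y + (l • Y - X) := by module
  rw [key]
  exact PosSemidef.add (psd_smul hY.posSemidef (by linarith)) hlS.2

lemma wfac_pos [Nonempty n] {X Y : Matrix n n ℂ} (hX : X.PosDef) (hY : Y.PosDef) :
    0 < wfac X Y := by
  by_contra h
  push_neg at h
  have hpsd := wfac_psd hX hY
  set v : n → ℂ := Pi.single (Classical.arbitrary n) 1 with hv
  have hv0 : v ≠ 0 := by
    intro h0
    have := congr_fun h0 (Classical.arbitrary n)
    simp [hv] at this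
  have h1 : 0 ≤ RCLike.re (star v ⬝ᵥ ((wfac X Y) • Y - X) *ᵥ v) :=
    hpsd.re_dotProduct_nonneg v
  have h2 : RCLike.re (star v ⬝ᵥ ((wfac X Y) • Y - X) *ᵥ v)
      = wfac X Y * RCLike.re (star v ⬝ᵥ Y *ᵥ v) - RCLike.re (star v ⬝ᵥ X *ᵥ v) := by
    rw [sub_mulVec, dotProduct_sub, map_sub, re_dot_smul]
  have hXpos : 0 < RCLike.re (star v ⬝ᵥ X *ᵥ v) := hX.re_dotProduct_pos hv0
  have hYpos : 0 < RCLike.re (star v ⬝ᵥ Y *ᵥ v) := hY.re_dotProduct_pos hv0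
  nlinarith

lemma wfac_nonneg (X Y : Matrix n n ℂ) : 0 ≤ wfac X Y :=
  Real.sInf_nonneg fun _ hl => hl.1.le

lemma thompson_nonneg [Nonempty n] {X Y : Matrix n n ℂ} (hX : X.PosDef) (hY : Y.PosDef) :
    0 ≤ thompson X Y := by
  have hm := wfac_psd hX hY
  have hm' := wfac_psd hY hX
  have hmpos := wfac_pos hX hY
  have hm'pos := wfac_pos hY hX
  set m := wfac X Y
  set m' := wfac Y X
  have key : (m * m' - 1) • X = m • (m' • X - Y) + (m • Y - X) := by module
  have hpsd : ((m * m' - 1) • X).PosSemidef := by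
    rw [key]; exact (psd_smul hm' hmpos.le).add hm
  set v : n → ℂ := Pi.single (Classical.arbitrary n) 1 with hv
  have hv0 : v ≠ 0 := by
    intro h0
    have := congr_fun h0 (Classical.arbitrary n)
    simp [hv] at this
  have h1 : 0 ≤ RCLike.re (star v ⬝ᵥ ((m * m' - 1) • X) *ᵥ v) := hpsd.re_dotProduct_nonneg v
  rw [re_dot_smul] at h1
  have hXpos : 0 < RCLike.re (star v ⬝ᵥ X *ᵥ v) := hX.re_dotProduct_pos hv0
  have hmm' : 1 ≤ m * m' := by nlinarith
  have hlog : 0 ≤ Real.log m + Real.log m' := by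
    rw [← Real.log_mul hmpos.ne' hm'pos.ne']
    exact Real.log_nonneg hmm'
  have := le_max_left (Real.log m) (Real.log m')
  have := le_max_right (Real.log m) (Real.log m')
  unfold thompson
  by_contra hcon
  push_neg at hcon
  have h4 : Real.log m < 0 := lt_of_le_of_lt (le_max_left _ _) hcon
  have h5 : Real.log m' < 0 := lt_of_le_of_lt (le_max_right _ _) hcon
  linarith

/-- Scalar AM-GM inequality at the heart of the contraction. -/
lemma scalar_key {α β t : ℝ} (hα : 0 < α) (hβ : 0 ≤ β) (_ht : 0 ≤ t) :
    α + β ≤ β * Real.exp (α / (α + β) * t) + α * Real.exp (α / (α + β) * t - t) := by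
  have hab : 0 < α + β := by linarith
  have w₁ : ℝ := β / (α + β)
  have hgm := Real.geom_mean_le_arith_mean2_weighted
    (show 0 ≤ β / (α + β) by positivity) (show 0 ≤ α / (α + β) by positivity)
    (Real.exp_pos (α / (α + β) * t)).le (Real.exp_pos (α / (α + β) * t - t)).le
    (by field_simp; ring)
  have hpow1 : Real.exp (α / (α + β) * t) ^ (β / (α + β))
      = Real.exp (α / (α + β) * t * (β / (α + β))) := by
    rw [← Real.exp_mul]
  have hpow2 : Real.exp (α / (α + β) * t - t) ^ (α / (α + β))
      = Real.exp ((α / (α + β) * t - t) * (α / (α + β))) := by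
    rw [← Real.exp_mul]
  rw [hpow1, hpow2, ← Real.exp_add] at hgm
  have hzero : α / (α + β) * t * (β / (α + β)) + (α / (α + β) * t - t) * (α / (α + β)) = 0 := by
    field_simp
    ring
  rw [hzero, Real.exp_zero] at hgm
  have := mul_le_mul_of_nonneg_left hgm hab.le
  calc α + β = (α + β) * 1 := by ring
    _ ≤ (α + β) * (β / (α + β) * Real.exp (α / (α + β) * t)
        + α / (α + β) * Real.exp (α / (α + β) * t - t)) := this
    _ = β * Real.exp (α / (α + β) * t) + α * Real.exp (α / (α + β) * t - t) := by
        field_simp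

/-- Decomposition identity used in the main estimate. -/
lemma decomp (X Y A : Matrix n n ℂ) {θ T μ : ℝ} (α β κ : ℝ) (hμ : μ = θ * T)
    (hκ : κ = β * μ + α * θ - (α + β)) :
    μ • (Y + A) - (X + A) = θ • (T • Y - X) + (1 - θ) • (α • (1 : Matrix n n ℂ) - X)
      + (μ - 1) • (A - β • (1 : Matrix n n ℂ)) + κ • (1 : Matrix n n ℂ) := by
  subst hμ hκ
  match_scalars <;> ring

/-- Key one-sided estimate. -/
lemma log_wfac_add_le [Nonempty n] {X Y A : Matrix n n ℂ}
    (hX : X.PosDef) (hY : Y.PosDef) (hA : A.PosSemidef) {α : ℝ}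
    (hαX : ∀ i, hX.1.eigenvalues i ≤ α) (hαY : ∀ i, hY.1.eigenvalues i ≤ α) (hα : 0 < α) :
    Real.log (wfac (X + A) (Y + A)) ≤
      α / (α + ⨅ i, hA.1.eigenvalues i) * thompson X Y := by
  set β := ⨅ i, hA.1.eigenvalues i with hβdef
  have hβ : 0 ≤ β := by
    obtain ⟨i₀, hi₀⟩ := exists_eq_ciInf_of_finite (f := hA.1.eigenvalues)
    rw [hβdef, ← hi₀]
    exact hA.eigenvalues_nonneg i₀
  have hab : 0 < α + β := by linarith
  set t := thompson X Y with htdef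
  have ht : 0 ≤ t := thompson_nonneg hX hY
  set c := α / (α + β) with hcdef
  have hc0 : 0 ≤ c := by positivity
  have hc1 : c ≤ 1 := by
    rw [hcdef, div_le_one hab]; linarith
  -- X ⪯ exp t • Y
  have hm := wfac_psd hX hY
  have hmpos := wfac_pos hX hY
  have hlogm : Real.log (wfac X Y) ≤ t := le_max_left _ _
  have hmle : wfac X Y ≤ Real.exp t := by
    calc wfac X Y = Real.exp (Real.log (wfac X Y)) := (Real.exp_log hmpos).symm
      _ ≤ Real.exp t := Real.exp_le_exp.mpr hlogm
  have hXY : (Real.exp t • Y - X).PosSemidef := by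
    have key : Real.exp t • Y - X = (Real.exp t - wfac X Y) • Y + (wfac X Y • Y - X) := by
      module
    rw [key]
    exact (psd_smul hY.posSemidef (by linarith)).add hm
  -- pieces
  have hXα : (α • (1 : Matrix n n ℂ) - X).PosSemidef := psd_smul_one_sub hX.1 hαX
  have hAβ : (A - β • (1 : Matrix n n ℂ)).PosSemidef :=
    psd_sub_smul_one hA.1 fun i => ciInf_le (Set.finite_range _).bddBelow i
  set θ := Real.exp (c * t - t) with hθdef
  set μ := Real.exp (c * t) with hμdef
  have hθ0 : 0 ≤ θ := (Real.exp_pos _).le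
  have hθ1 : θ ≤ 1 := Real.exp_le_one_iff.mpr (by nlinarith)
  have hμ1 : 1 ≤ μ := Real.one_le_exp (by positivity)
  have hμθ : μ = θ * Real.exp t := by
    rw [hθdef, hμdef, ← Real.exp_add]; ring_nf
  set κ := β * μ + α * θ - (α + β) with hκdef
  have hκ0 : 0 ≤ κ := by
    have := scalar_key hα hβ ht
    rw [hκdef, hμdef, hθdef]
    have harg : c * t - t = α / (α + β) * t - t := by rw [hcdef]
    rw [hμdef, hθdef] at *
    simp only [hcdef] at *
    linarith
  have hE : (μ • (Y + A) - (X + A)).PosSemidef := by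
    rw [decomp X Y A α β κ hμθ hκdef]
    exact (((psd_smul hXY hθ0).add (psd_smul hXα (by linarith))).add
      (psd_smul hAβ (by linarith))).add (psd_smul PosSemidef.one hκ0)
  have hmem : μ ∈ {l : ℝ | 0 < l ∧ ((l : ℝ) • (Y + A) - (X + A)).PosSemidef} :=
    ⟨Real.exp_pos _, hE⟩
  have hle : wfac (X + A) (Y + A) ≤ μ :=
    csInf_le ⟨0, fun l hl => hl.1.le⟩ hmem
  rcases eq_or_lt_of_le (wfac_nonneg (X + A) (Y + A)) with h0 | h0
  · rw [← h0, Real.log_zero]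
    exact mul_nonneg hc0 ht
  · calc Real.log (wfac (X + A) (Y + A)) ≤ Real.log μ :=
        (Real.log_le_log_iff h0 (Real.exp_pos _)).mpr hle
      _ = c * t := Real.log_exp _

lemma psd_isEmpty [IsEmpty n] (M : Matrix n n ℂ) : M.PosSemidef := by
  refine .of_dotProduct_mulVec_nonneg ?_ fun x => ?_
  · ext i j; exact isEmptyElim i
  · simp [dotProduct]

lemma wfac_isEmpty [IsEmpty n] (M N : Matrix n n ℂ) : wfac M N = 0 := by
  unfold wfac
  have : {l : ℝ | 0 < l ∧ ((l : ℝ) • N - M).PosSemidef} = Set.Ioi 0 := by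
    ext l; simp [psd_isEmpty]
  rw [this, csInf_Ioi]

/-- The Thompson metric contracts under positive translations:
`δ_T(X+A, Y+A) ≤ (α/(α+β)) δ_T(X,Y)` with `α = max{‖X‖,‖Y‖}` (largest eigenvalue)
and `β = λ_min(A)`. -/
theorem thompson_translation_contraction {X Y A : Matrix n n ℂ}
    (hX : X.PosDef) (hY : Y.PosDef) (hA : A.PosSemidef) :
    thompson (X + A) (Y + A) ≤
      (max (⨆ i, hX.1.eigenvalues i) (⨆ i, hY.1.eigenvalues i) /
        (max (⨆ i, hX.1.eigenvalues i) (⨆ i, hY.1.eigenvalues i) +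
          ⨅ i, hA.1.eigenvalues i)) * thompson X Y := by
  rcases isEmpty_or_nonempty n with hn | hn
  · simp [thompson, wfac_isEmpty]
  · set α := max (⨆ i, hX.1.eigenvalues i) (⨆ i, hY.1.eigenvalues i) with hαdef
    have hα : 0 < α := by
      obtain ⟨i₀, hi₀⟩ := exists_eq_ciSup_of_finite (f := hX.1.eigenvalues)
      have : 0 < ⨆ i, hX.1.eigenvalues i := hi₀ ▸ hX.eigenvalues_pos i₀
      exact lt_of_lt_of_le this (le_max_left _ _)
    have hαX : ∀ i, hX.1.eigenvalues i ≤ α := fun i =>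
      le_trans (le_ciSup (Set.finite_range _).bddAbove i) (le_max_left _ _)
    have hαY : ∀ i, hY.1.eigenvalues i ≤ α := fun i =>
      le_trans (le_ciSup (Set.finite_range _).bddAbove i) (le_max_right _ _)
    have h1 := log_wfac_add_le hX hY hA hαX hαY hα
    have h2 := log_wfac_add_le hY hX hA hαY hαX hα
    have hsymm : thompson Y X = thompson X Y := max_comm _ _
    rw [hsymm] at h2
    unfold thompson
    exact max_le h1 h2

end CGO
end

section
/- If c ≥ 0 and -1 < τ < 1, then g(x) = c·x + x^τ on (0,∞) is log-contractive: for all s ≠ t > 0, |log g(t) − log g(s)| < |log t − log s|. -/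
open Real

lemma log_contractive_aux {c : ℝ} (hc : 0 ≤ c) {τ : ℝ}
    (hτ : -1 < τ) (hτ' : τ < 1) {s t : ℝ} (hs : 0 < s) (hst : s < t) :
    |Real.log (c * t + t ^ τ) - Real.log (c * s + s ^ τ)| <
      Real.log t - Real.log s := by
  have ht : 0 < t := hs.trans hst
  have hgs : 0 < c * s + s ^ τ :=
    add_pos_of_nonneg_of_pos (mul_nonneg hc hs.le) (Real.rpow_pos_of_pos hs τ)
  have hgt : 0 < c * t + t ^ τ :=
    add_pos_of_nonneg_of_pos (mul_nonneg hc ht.le) (Real.rpow_pos_of_pos ht τ)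
  have hsτ : s ^ τ = s ^ (τ - 1) * s := by
    rw [← Real.rpow_add_one hs.ne' (τ - 1)]; ring_nf
  have htτ : t ^ τ = t ^ (τ - 1) * t := by
    rw [← Real.rpow_add_one ht.ne' (τ - 1)]; ring_nf
  rw [abs_sub_lt_iff]
  constructor
  · -- log g t - log g s < log t - log s, i.e. s * g t < t * g s
    have key : s * (c * t + t ^ τ) < t * (c * s + s ^ τ) := by
      have h1 : t ^ (τ - 1) < s ^ (τ - 1) :=
        Real.rpow_lt_rpow_of_neg hs hst (by linarith)
      rw [hsτ, htτ]
      nlinarith [mul_lt_mul_of_pos_left h1 (mul_pos hs ht)]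
    have := Real.log_lt_log (by positivity) key
    rw [Real.log_mul hs.ne' hgt.ne', Real.log_mul ht.ne' hgs.ne'] at this
    linarith
  · -- log g s - log g t < log t - log s, i.e. s * g s < t * g t
    have key : s * (c * s + s ^ τ) < t * (c * t + t ^ τ) := by
      have h1 : s ^ (τ - 1) * s * s < t ^ (τ - 1) * t * t := by
        have : s ^ (τ + 1) < t ^ (τ + 1) := Real.rpow_lt_rpow hs.le hst (by linarith)
        rw [← Real.rpow_add_one hs.ne', ← Real.rpow_add_one ht.ne',
          ← Real.rpow_add_one hs.ne', ← Real.rpow_add_one ht.ne']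
        convert this using 2 <;> ring
      have h2 : c * (s * s) ≤ c * (t * t) :=
        mul_le_mul_of_nonneg_left (by nlinarith) hc
      rw [hsτ, htτ]
      nlinarith
    have := Real.log_lt_log (by positivity) key
    rw [Real.log_mul hs.ne' hgs.ne', Real.log_mul ht.ne' hgt.ne'] at this
    linarith

/-- If `c ≥ 0` and `-1 < τ < 1`, then `g(x) = c x + x^τ` is
log-contractive on `(0,∞)`. -/
theorem log_contractive_c_mul_add_rpow {c : ℝ} (hc : 0 ≤ c) {τ : ℝ}
    (hτ : -1 < τ) (hτ' : τ < 1) {s t : ℝ} (hs : 0 < s) (ht : 0 < t) (hst : s ≠ t) :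
    |Real.log (c * t + t ^ τ) - Real.log (c * s + s ^ τ)| <
      |Real.log t - Real.log s| := by
  rcases hst.lt_or_gt with h | h
  · exact (log_contractive_aux hc hτ hτ' hs h).trans_le (le_abs_self _)
  · rw [abs_sub_comm (Real.log t), abs_sub_comm (Real.log (c * t + t ^ τ))]
    exact (log_contractive_aux hc hτ hτ' ht h).trans_le (le_abs_self _)
end
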